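/- Let T be a Krull-Schmidt triangulated category and let a --f--> e1 ⊕ e2 --(g1;g2)--> b --h--> Σa be a distinguished triangle with a and b indecomposable, e2 ≠ 0, and h ≠ 0 (the triangle is non-split). If the component f2 : a → e2 of f is zero, then e2 is isomorphic to a direct summand of b; since b is indecomposable, e2 ≅ b and this forces g2 to be an isomorphism onto that summand. -/

import Mathlib

open CategoryTheory CategoryTheory.Limits CategoryTheory.Pretriangulated

/-- Let `a ⟶ e1 ⊞ e2 ⟶ b ⟶ Σa` be a non-split distinguished triangle in a
Krull-Schmidt (idempotent complete, with local endomorphism rings of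
indecomposables) triangulated category, with `a`, `b` indecomposable and
`e2 ≠ 0`. If the component `f2 : a ⟶ e2` of the first map is zero, then
`e2 ≅ b` and the component `g2 : e2 ⟶ b` of the second map is an isomorphism. -/
theorem stmt_14 {C : Type*} [Category C] [Preadditive C] [HasZeroObject C]
    [HasShift C ℤ] [∀ n : ℤ, (shiftFunctor C n).Additive] [Pretriangulated C]
    [HasBinaryBiproducts C] [IsIdempotentComplete C]
    (krullSchmidt : ∀ X : C, Indecomposable X →
      ∀ φ : X ⟶ X, IsIso φ ∨ IsIso (𝟙 X - φ))
    {a b e₁ e₂ : C} (f₁ : a ⟶ e₁) (f₂ : a ⟶ e₂) (g₁ : e₁ ⟶ b) (g₂ : e₂ ⟶ b)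
    (h : b ⟶ a⟦(1 : ℤ)⟧)
    (hT : Triangle.mk (biprod.lift f₁ f₂) (biprod.desc g₁ g₂) h ∈ distTriang C)
    (ha : Indecomposable a) (hb : Indecomposable b)
    (he₂ : ¬ IsZero e₂) (hns : h ≠ 0) (hf₂ : f₂ = 0) :
    Nonempty (e₂ ≅ b) ∧ IsIso g₂ := by
  subst hf₂
  -- `biprod.snd` is killed by the first map, so it factors through `b`,
  -- giving a retraction `r` of `g₂`.
  obtain ⟨r, hr⟩ := Triangle.yoneda_exact₂ _ hT (biprod.snd : e₁ ⊞ e₂ ⟶ e₂) (by exact biprod.lift_snd _ _)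
  change b ⟶ e₂ at r; change biprod.snd = biprod.desc g₁ g₂ ≫ r at hr
  have hgr : g₂ ≫ r = 𝟙 e₂ := by
    have := congrArg (fun φ => (biprod.inr : e₂ ⟶ e₁ ⊞ e₂) ≫ φ) hr
    simpa using this.symm
  -- the idempotent `e = r ≫ g₂` on the indecomposable `b`
  have hidem : (r ≫ g₂) ≫ (r ≫ g₂) = r ≫ g₂ := by
    rw [Category.assoc, ← Category.assoc g₂, hgr, Category.id_comp]
  rcases krullSchmidt b hb (r ≫ g₂) with hi | hi
  · -- an idempotent isomorphism is the identity
    have he : r ≫ g₂ = 𝟙 b := by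
      rw [← cancel_epi (r ≫ g₂), Category.comp_id]
      exact hidem
    have : IsIso g₂ := ⟨r, hgr, he⟩
    exact ⟨⟨asIso g₂⟩, this⟩
  · -- then `𝟙 - e` is an idempotent isomorphism, hence `e = 0`, so `e₂ ≅ 0`
    exfalso
    have hidem' : (𝟙 b - r ≫ g₂) ≫ (𝟙 b - r ≫ g₂) = 𝟙 b - r ≫ g₂ := by
      simp [Preadditive.sub_comp, Preadditive.comp_sub, hidem]
    have he : 𝟙 b - r ≫ g₂ = 𝟙 b := by
      rw [← cancel_epi (𝟙 b - r ≫ g₂), Category.comp_id]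
      exact hidem'
    have hzero : r ≫ g₂ = 0 := by
      have := he
      rw [sub_eq_self] at this
      exact this
    apply he₂
    rw [IsZero.iff_id_eq_zero]
    calc 𝟙 e₂ = g₂ ≫ r := hgr.symm
    _ = (g₂ ≫ r) ≫ (g₂ ≫ r) := by rw [hgr, Category.comp_id]
    _ = g₂ ≫ (r ≫ g₂) ≫ r := by simp
    _ = 0 := by rw [hzero]; simp
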